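/- For every partition λ of n, the composite map σ∘π applied to λ equals the conjugate partition λ* of λ, where π(λ)_i = i·λ_i + Σ_{j>i} λ_j and σ(φ) is the partition in which i has frequency (φ_i − φ_{i+1})/i. -/

import Mathlib

/-- A partition represented as a weakly decreasing list of positive integers. -/
def IsPartition (l : List ℕ) : Prop :=
  l.Pairwise (· ≥ ·) ∧ ∀ x ∈ l, 0 < x

/-- Sequentially congruent: `λ_i ≡ λ_{i+1} (mod i)` for `1 ≤ i ≤ r-1` and `λ_r ≡ 0 (mod r)`
(0-indexed, with the convention `λ_{r+1} = 0`). -/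
def SeqCongruent (l : List ℕ) : Prop :=
  ∀ j < l.length, l.getD j 0 ≡ l.getD (j+1) 0 [MOD j+1]

/-- The map `π`: `π(λ)_i = i·λ_i + Σ_{j=i+1}^r λ_j` (1-indexed). -/
def piMap (l : List ℕ) : List ℕ :=
  (List.range l.length).map (fun j => (j+1) * l.getD j 0 + (l.drop (j+1)).sum)

/-- The map `σ`: the partition in which `i` occurs with frequency `(φ_i - φ_{i+1})/i`. -/
def sigmaMap (l : List ℕ) : List ℕ :=
  ((List.range l.length).reverse).flatMap
    (fun j => List.replicate ((l.getD j 0 - l.getD (j+1) 0) / (j+1)) (j+1))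

/-- The conjugate partition: its `i`-th part is the number of parts of `l` that are `≥ i`. -/
def conj (l : List ℕ) : List ℕ :=
  (List.range (l.getD 0 0)).map (fun i => l.countP (fun x => decide (i + 1 ≤ x)))

/-- Frequency congruent: each part `i` occurs with frequency divisible by `i`. -/
def FreqCongruent (l : List ℕ) : Prop :=
  ∀ i, 0 < i → i ∣ l.count i

/-- auxiliary simple form of σ∘π -/
def simpSig (l : List ℕ) : List ℕ :=
  ((List.range l.length).reverse).flatMap
    (fun j => List.replicate (l.getD j 0 - l.getD (j+1) 0) (j+1))

lemma piMap_getD (l : List ℕ) (j : ℕ) :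
    (piMap l).getD j 0 = (j+1) * l.getD j 0 + (l.drop (j+1)).sum := by
  by_cases h : j < l.length
  · have hlen : j < (piMap l).length := by
      simp only [piMap, List.length_map, List.length_range]; exact h
    rw [List.getD_eq_getElem _ _ hlen]
    simp [piMap]
  · push_neg at h
    rw [List.getD_eq_default _ _ (by simpa [piMap] using h),
        List.getD_eq_default _ _ h, List.drop_eq_nil_of_le (by omega)]
    simp

lemma drop_sum_eq (l : List ℕ) (k : ℕ) :
    (l.drop k).sum = l.getD k 0 + (l.drop (k+1)).sum := by
  by_cases h : k < l.length
  · rw [List.drop_eq_getElem_cons h, List.getD_eq_getElem _ _ h, List.sum_cons]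
  · push_neg at h
    rw [List.getD_eq_default _ _ h, List.drop_eq_nil_of_le h,
        List.drop_eq_nil_of_le (Nat.le_succ_of_le h)]
    simp

lemma getD_mono (l : List ℕ) (hs : l.Pairwise (· ≥ ·)) (j : ℕ) :
    l.getD (j+1) 0 ≤ l.getD j 0 := by
  by_cases h : j + 1 < l.length
  · rw [List.getD_eq_getElem _ _ h, List.getD_eq_getElem _ _ (by omega)]
    exact (List.pairwise_iff_getElem.mp hs) j (j+1) (by omega) h (by omega)
  · push_neg at h
    rw [List.getD_eq_default _ _ h]
    exact Nat.zero_le _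

lemma sub_key (c A B S : ℕ) (h : B ≤ A) :
    c * A + (B + S) - ((c + 1) * B + S) = c * (A - B) := by
  obtain ⟨d, rfl⟩ := Nat.le.dest h
  have h1 : c * (B + d) = c * B + c * d := by ring
  have h2 : (c + 1) * B = c * B + B := by ring
  have h3 : B + d - B = d := by omega
  rw [h1, h2, h3]
  generalize c * B = x
  generalize c * d = y
  omega

lemma sigma_pi_eq_simpSig (l : List ℕ) (hs : l.Pairwise (· ≥ ·)) :
    sigmaMap (piMap l) = simpSig l := by
  have hlen : (piMap l).length = l.length := by simp [piMap]
  unfold sigmaMap simpSig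
  rw [hlen, List.flatMap_def, List.flatMap_def]
  congr 1
  apply List.map_congr_left
  intro j _
  have hAB : l.getD (j+1) 0 ≤ l.getD j 0 := getD_mono l hs j
  rw [piMap_getD, piMap_getD, drop_sum_eq l (j+1),
      sub_key (j+1) _ _ _ hAB, Nat.mul_div_cancel_left _ (Nat.succ_pos j)]

lemma simpSig_cons (a : ℕ) (t : List ℕ) :
    simpSig (a :: t) = (simpSig t).map (· + 1) ++
      List.replicate (a - t.getD 0 0) 1 := by
  unfold simpSig
  rw [show (a :: t).length = t.length + 1 from rfl, List.range_succ_eq_map,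
      List.reverse_cons, List.flatMap_append]
  congr 1
  · rw [← List.map_reverse, List.flatMap_map, List.map_flatMap]
    congr 1
    funext j
    simp [List.map_replicate]
  · simp

lemma conj_cons (a : ℕ) (t : List ℕ) (hm : t.getD 0 0 ≤ a)
    (ht : ∀ x ∈ t, x ≤ t.getD 0 0) :
    conj (a :: t) = (conj t).map (· + 1) ++ List.replicate (a - t.getD 0 0) 1 := by
  set m := t.getD 0 0 with hmdef
  unfold conj
  have hr : List.range a = List.range m ++ (List.range (a - m)).map (fun x => m + x) := by
    rw [← List.range_add]; congr 1; omega
  rw [show (a :: t).getD 0 0 = a from rfl, ← hmdef, hr, List.map_append, List.map_map]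
  congr 1
  · rw [List.map_map]
    apply List.map_congr_left
    intro i hi
    have hi' : i < m := List.mem_range.mp hi
    rw [List.countP_cons]
    have h1 : i + 1 ≤ a := by omega
    simp [h1]
  · have h2 : ∀ i ∈ List.range (a - m),
        ((fun i => (a :: t).countP (fun x => decide (i + 1 ≤ x))) ∘ (fun x => m + x)) i
          = (fun _ => 1) i := by
      intro i hi
      have hi' : i < a - m := List.mem_range.mp hi
      simp only [Function.comp_apply]
      rw [List.countP_cons]
      have hz : t.countP (fun x => decide (m + i + 1 ≤ x)) = 0 := by
        rw [List.countP_eq_zero]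
        intro x hx
        have := ht x hx
        simp only [decide_eq_true_eq]
        omega
      have ha : m + i + 1 ≤ a := by omega
      simp [hz, ha]
      exact fun x hx => le_trans (ht x hx) (by omega)
    rw [List.map_congr_left h2]
    simp [List.eq_replicate_iff]

lemma simpSig_eq_conj (l : List ℕ) (hl : IsPartition l) : simpSig l = conj l := by
  induction l with
  | nil => rfl
  | cons a t ih =>
    obtain ⟨hs, hp⟩ := hl
    have hst : t.Pairwise (· ≥ ·) := hs.of_cons
    have hpt : ∀ x ∈ t, 0 < x := fun x hx => hp x (List.mem_cons_of_mem _ hx)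
    have hma : t.getD 0 0 ≤ a := by
      cases t with
      | nil => simp
      | cons b s =>
        exact List.rel_of_pairwise_cons hs (List.mem_cons_self ..)
    have hmax : ∀ x ∈ t, x ≤ t.getD 0 0 := by
      cases t with
      | nil => intro x hx; simp at hx
      | cons b s =>
        intro x hx
        rcases List.mem_cons.mp hx with rfl | hx
        · simp
        · exact List.rel_of_pairwise_cons hst hx
    rw [simpSig_cons, conj_cons a t hma hmax, ih ⟨hst, hpt⟩]

theorem stmt8 (l : List ℕ) (hl : IsPartition l) :
    sigmaMap (piMap l) = conj l := by
  rw [sigma_pi_eq_simpSig l hl.1, simpSig_eq_conj l hl]
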